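/- Let μ be the self-similar measure on [L,M] with weights μ₁, μ₂ (μ₁+μ₂=1, μᵢ>0) for the contractions f₁(x)=(x+L)/2, f₂(x)=(x+M)/2. Let ψ^m_L be the piecewise linear hat function on [L,M] with ψ^m_L(L)=1, ψ^m_L(L + (M−L)/2^m)=0, supported on [L, L+(M−L)/2^m] and affine there. Then ∫_L^M ψ^m_L dμ = μ₁^{m+1}. Similarly ∫_L^M ψ^m_M dμ = μ₂^{m+1} for the analogous hat at M. -/

import Mathlib

open MeasureTheory Set

/-- The boundary hat function `ψ^m_L` at the left endpoint `L`. -/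
noncomputable def hatL (L M : ℝ) (m : ℕ) (Y : ℝ) : ℝ :=
  if Y ∈ Set.Icc L (L + (M - L) / 2^m) then 1 - 2^m / (M - L) * (Y - L) else 0

/-- The boundary hat function `ψ^m_M` at the right endpoint `M`. -/
noncomputable def hatM (L M : ℝ) (m : ℕ) (Y : ℝ) : ℝ :=
  if Y ∈ Set.Icc (M - (M - L) / 2^m) M then 2^m / (M - L) * (Y - M) + 1 else 0

lemma hatL_meas (L M : ℝ) (m : ℕ) : Measurable (hatL L M m) := by
  unfold hatL
  exact Measurable.ite measurableSet_Icc (by fun_prop) measurable_const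

lemma hatL_abs_le {L M : ℝ} (hLM : L < M) (m : ℕ) (x : ℝ) : |hatL L M m x| ≤ 1 := by
  have hML : (0:ℝ) < M - L := by linarith
  have h2m : (0:ℝ) < 2^m := by positivity
  unfold hatL
  split_ifs with h
  · obtain ⟨hx1, hx2⟩ := h
    have key : 2^m/(M-L)*(x-L) ≤ 1 := by
      rw [div_mul_eq_mul_div, div_le_one hML]
      calc (2:ℝ)^m*(x-L) ≤ 2^m * ((M-L)/2^m) :=
            mul_le_mul_of_nonneg_left (by linarith) h2m.le
        _ = M - L := by field_simp
    have key2 : 0 ≤ 2^m/(M-L)*(x-L) :=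
      mul_nonneg (div_nonneg h2m.le hML.le) (by linarith)
    rw [abs_le]; constructor <;> linarith
  · simp

lemma hatL_zero_off {L M : ℝ} (hLM : L < M) (m : ℕ) {x : ℝ} (hx : x ∉ Set.Icc L M) :
    hatL L M m x = 0 := by
  have hML : (0:ℝ) < M - L := by linarith
  have h1 : (1:ℝ) ≤ 2^m := one_le_pow₀ (by norm_num)
  unfold hatL
  rw [if_neg]
  intro hc
  exact hx ⟨hc.1, le_trans hc.2 (by nlinarith [div_le_self hML.le h1])⟩

lemma hatM_eq_hatL {L M : ℝ} (m : ℕ) (x : ℝ) : hatM L M m x = hatL L M m (L + M - x) := by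
  unfold hatL hatM
  by_cases h : x ∈ Set.Icc (M - (M-L)/2^m) M
  · rw [if_pos h, if_pos (by obtain ⟨a, b⟩ := h; exact ⟨by linarith, by linarith⟩)]
    ring
  · rw [if_neg h, if_neg]
    intro hc
    exact h ⟨by linarith [hc.2], by linarith [hc.1]⟩

lemma int_of_bdd {ν : Measure ℝ} [IsFiniteMeasure ν] {h : ℝ → ℝ}
    (hm : Measurable h) (hb : ∀ x, |h x| ≤ 1) : Integrable h ν :=
  (integrable_const 1).mono' hm.aestronglyMeasurable
    (ae_of_all _ fun x => by simpa [Real.norm_eq_abs] using hb x)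

lemma selfsim {L M : ℝ} {μ₁ μ₂ : ℝ} (h1 : 0 < μ₁) (h2 : 0 < μ₂)
    {μ : Measure ℝ} [IsProbabilityMeasure μ]
    (hself : μ = ENNReal.ofReal μ₁ • μ.map (fun x => (x + L) / 2) +
              ENNReal.ofReal μ₂ • μ.map (fun x => (x + M) / 2))
    {h : ℝ → ℝ} (hm : Measurable h) (hb : ∀ x, |h x| ≤ 1) :
    ∫ x, h x ∂μ = μ₁ * ∫ x, h ((x+L)/2) ∂μ + μ₂ * ∫ x, h ((x+M)/2) ∂μ := by
  have hf1 : Measurable (fun x : ℝ => (x+L)/2) := by fun_prop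
  have hf2 : Measurable (fun x : ℝ => (x+M)/2) := by fun_prop
  haveI p1 : IsProbabilityMeasure (μ.map (fun x : ℝ => (x+L)/2)) :=
    Measure.isProbabilityMeasure_map hf1.aemeasurable
  haveI p2 : IsProbabilityMeasure (μ.map (fun x : ℝ => (x+M)/2)) :=
    Measure.isProbabilityMeasure_map hf2.aemeasurable
  have i1 : Integrable h (μ.map (fun x : ℝ => (x+L)/2)) := int_of_bdd hm hb
  have i2 : Integrable h (μ.map (fun x : ℝ => (x+M)/2)) := int_of_bdd hm hb
  conv_lhs => rw [hself]
  rw [integral_add_measure (i1.smul_measure ENNReal.ofReal_ne_top)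
      (i2.smul_measure ENNReal.ofReal_ne_top),
    integral_smul_measure, integral_smul_measure,
    integral_map hf1.aemeasurable hm.aestronglyMeasurable,
    integral_map hf2.aemeasurable hm.aestronglyMeasurable,
    ENNReal.toReal_ofReal h1.le, ENNReal.toReal_ofReal h2.le]
  simp [smul_eq_mul]

lemma hatL_comp1 (L M : ℝ) (m : ℕ) (x : ℝ) :
    hatL L M (m+1) ((x+L)/2) = hatL L M m x := by
  unfold hatL
  have hc : (M - L)/2^(m+1) = ((M-L)/2^m)/2 := by rw [pow_succ]; ring
  rw [hc]
  by_cases hx : x ∈ Set.Icc L (L + (M-L)/2^m)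
  · rw [if_pos (by obtain ⟨a, b⟩ := hx; exact ⟨by linarith, by linarith⟩), if_pos hx]
    rw [pow_succ]; ring
  · rw [if_neg, if_neg hx]
    intro hc2
    exact hx ⟨by linarith [hc2.1], by linarith [hc2.2]⟩

lemma hatL_comp2 {L M : ℝ} (hLM : L < M) (m : ℕ) {x : ℝ} (hx : L ≤ x) :
    hatL L M (m+1) ((x+M)/2) = 0 := by
  have hML : (0:ℝ) < M - L := by linarith
  have h2m : (1:ℝ) ≤ 2^m := one_le_pow₀ (by norm_num)
  have h2m' : (0:ℝ) < 2^(m+1) := by positivity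
  unfold hatL
  split_ifs with h
  · have hle : (M-L)/2^(m+1) ≤ (M-L)/2 := by
      apply div_le_div_of_nonneg_left hML.le (by norm_num)
      rw [pow_succ]; nlinarith
    have heq : (x+M)/2 = L + (M-L)/2^(m+1) := le_antisymm h.2 (by linarith)
    rw [heq]
    field_simp
    ring
  · rfl

lemma left_integral (L M : ℝ) (hLM : L < M) (μ₁ μ₂ : ℝ) (h1 : 0 < μ₁) (h2 : 0 < μ₂)
    (hsum : μ₁ + μ₂ = 1) (μ : Measure ℝ) [IsProbabilityMeasure μ]
    (hself : μ = ENNReal.ofReal μ₁ • μ.map (fun x => (x + L) / 2) +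
              ENNReal.ofReal μ₂ • μ.map (fun x => (x + M) / 2))
    (hsupp : μ (Set.Icc L M)ᶜ = 0) (m : ℕ) :
    ∫ x, hatL L M m x ∂μ = μ₁^(m+1) := by
  have hML : (0:ℝ) < M - L := by linarith
  have hae : ∀ᵐ x ∂μ, x ∈ Set.Icc L M := by
    rw [ae_iff]
    simpa [compl_def] using hsupp
  induction m with
  | zero =>
    have intL : Integrable (hatL L M 0) μ := int_of_bdd (hatL_meas L M 0) (hatL_abs_le hLM 0)
    have step := selfsim h1 h2 hself (hatL_meas L M 0) (hatL_abs_le hLM 0)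
    have ea : ∫ x, hatL L M 0 ((x+L)/2) ∂μ = ∫ x, (1 + hatL L M 0 x)/2 ∂μ := by
      refine integral_congr_ae (hae.mono fun x hx => ?_)
      obtain ⟨hx1, hx2⟩ := hx
      show hatL L M 0 ((x+L)/2) = (1 + hatL L M 0 x)/2
      unfold hatL
      simp only [pow_zero, div_one, Set.mem_Icc]
      rw [if_pos ⟨by linarith, by linarith⟩, if_pos ⟨by linarith, by linarith⟩]
      field_simp
      ring
    have eb : ∫ x, hatL L M 0 ((x+M)/2) ∂μ = ∫ x, hatL L M 0 x / 2 ∂μ := by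
      refine integral_congr_ae (hae.mono fun x hx => ?_)
      obtain ⟨hx1, hx2⟩ := hx
      show hatL L M 0 ((x+M)/2) = hatL L M 0 x / 2
      unfold hatL
      simp only [pow_zero, div_one, Set.mem_Icc]
      rw [if_pos ⟨by linarith, by linarith⟩, if_pos ⟨by linarith, by linarith⟩]
      field_simp
      ring
    have lin1 : ∫ x, (1 + hatL L M 0 x)/2 ∂μ = (1 + ∫ x, hatL L M 0 x ∂μ)/2 := by
      rw [integral_div, integral_add (integrable_const 1) intL, integral_const]
      simp
    rw [ea, eb, lin1, integral_div] at step
    have hmix : μ₁ * (∫ x, hatL L M 0 x ∂μ) + μ₂ * (∫ x, hatL L M 0 x ∂μ)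
        = ∫ x, hatL L M 0 x ∂μ := by rw [← add_mul, hsum, one_mul]
    rw [zero_add, pow_one]
    linarith [step, hmix]
  | succ n ih =>
    have step := selfsim h1 h2 hself (hatL_meas L M (n+1)) (hatL_abs_le hLM (n+1))
    have e1 : ∫ x, hatL L M (n+1) ((x+L)/2) ∂μ = ∫ x, hatL L M n x ∂μ := by
      simp only [hatL_comp1]
    have e2 : ∫ x, hatL L M (n+1) ((x+M)/2) ∂μ = 0 := by
      refine integral_eq_zero_of_ae (hae.mono fun x hx => ?_)
      exact hatL_comp2 hLM n hx.1
    rw [e1, e2, ih] at step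
    rw [step]
    ring

theorem stmt_12 (L M : ℝ) (hLM : L < M) (μ₁ μ₂ : ℝ) (h1 : 0 < μ₁) (h2 : 0 < μ₂)
    (hsum : μ₁ + μ₂ = 1)
    (μ : MeasureTheory.Measure ℝ) [MeasureTheory.IsProbabilityMeasure μ]
    (hself : μ = ENNReal.ofReal μ₁ • μ.map (fun x => (x + L) / 2) +
              ENNReal.ofReal μ₂ • μ.map (fun x => (x + M) / 2))
    (hsupp : μ (Set.Icc L M)ᶜ = 0) (m : ℕ) :
    (∫ Y in Set.Icc L M, hatL L M m Y ∂μ) = μ₁^(m+1) ∧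
    (∫ Y in Set.Icc L M, hatM L M m Y ∂μ) = μ₂^(m+1) := by
  have hML : (0:ℝ) < M - L := by linarith
  have hr : Measurable (fun x : ℝ => L + M - x) := by fun_prop
  have hf1 : Measurable (fun x : ℝ => (x+L)/2) := by fun_prop
  have hf2 : Measurable (fun x : ℝ => (x+M)/2) := by fun_prop
  constructor
  · rw [setIntegral_eq_integral_of_forall_compl_eq_zero
      (fun x hx => hatL_zero_off hLM m hx)]
    exact left_integral L M hLM μ₁ μ₂ h1 h2 hsum μ hself hsupp m
  · haveI : IsProbabilityMeasure (μ.map (fun x : ℝ => L + M - x)) :=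
      Measure.isProbabilityMeasure_map hr.aemeasurable
    have hself' : μ.map (fun x : ℝ => L + M - x)
        = ENNReal.ofReal μ₂ • (μ.map (fun x : ℝ => L + M - x)).map (fun x => (x + L) / 2) +
          ENNReal.ofReal μ₁ • (μ.map (fun x : ℝ => L + M - x)).map (fun x => (x + M) / 2) := by
      have h := congrArg (fun ν : Measure ℝ => ν.map (fun x : ℝ => L + M - x)) hself
      rw [Measure.map_add _ _ hr, Measure.map_smul, Measure.map_smul,
          Measure.map_map hr hf1, Measure.map_map hr hf2] at h
      have e1 : ((fun x : ℝ => L + M - x) ∘ (fun x : ℝ => (x+L)/2))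
          = ((fun x : ℝ => (x+M)/2) ∘ (fun x : ℝ => L + M - x)) := by
        funext x; simp only [Function.comp_apply]; ring
      have e2 : ((fun x : ℝ => L + M - x) ∘ (fun x : ℝ => (x+M)/2))
          = ((fun x : ℝ => (x+L)/2) ∘ (fun x : ℝ => L + M - x)) := by
        funext x; simp only [Function.comp_apply]; ring
      rw [e1, e2, ← Measure.map_map hf2 hr, ← Measure.map_map hf1 hr] at h
      exact h.trans (add_comm _ _)
    have hsupp' : (μ.map (fun x : ℝ => L + M - x)) (Set.Icc L M)ᶜ = 0 := by
      rw [Measure.map_apply hr measurableSet_Icc.compl]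
      have : (fun x : ℝ => L + M - x) ⁻¹' (Set.Icc L M)ᶜ = (Set.Icc L M)ᶜ := by
        rw [preimage_compl]
        congr 1
        ext x
        simp only [mem_preimage, mem_Icc]
        constructor <;> intro hx <;> exact ⟨by linarith [hx.2], by linarith [hx.1]⟩
      rw [this]
      exact hsupp
    have hMoff : ∀ x ∉ Set.Icc L M, hatM L M m x = 0 := by
      intro x hx
      rw [hatM_eq_hatL]
      apply hatL_zero_off hLM
      intro hc
      exact hx ⟨by linarith [hc.2], by linarith [hc.1]⟩
    rw [setIntegral_eq_integral_of_forall_compl_eq_zero hMoff]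
    calc ∫ x, hatM L M m x ∂μ = ∫ x, hatL L M m (L + M - x) ∂μ := by
          simp only [hatM_eq_hatL]
      _ = ∫ y, hatL L M m y ∂(μ.map (fun x : ℝ => L + M - x)) :=
          (integral_map hr.aemeasurable (hatL_meas L M m).aestronglyMeasurable).symm
      _ = μ₂^(m+1) := left_integral L M hLM μ₂ μ₁ h2 h1 (by linarith) _ hself' hsupp' m
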